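/- arXiv:2007.11878 — 2 statements merged into one kernel-verified Lean document; each statement's English description precedes it below -/
import Mathlib

section
/- Let $0 < \overline{\varrho} < \infty$, $p \in C^1[0, \overline{\varrho})$ with $p' > 0$ on $(0,\overline{\varrho})$, and let $P$ satisfy $P'(\varrho)\varrho - P(\varrho) = p(\varrho)$. Fix $0 < \underline{\varrho} < \overline{\varrho}$. Then for all $\varrho \in (\underline{\varrho}, \overline{\varrho})$, $P(\varrho) \leq P(\underline{\varrho}) + \overline{\varrho}\,\big|P'(\underline{\varrho}) - p(\underline{\varrho})/\underline{\varrho}\big| + \frac{\overline{\varrho}}{\underline{\varrho}^2}(\overline{\varrho} - \underline{\varrho})\, p(\varrho)$. -/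
open Set

theorem stmt1 (ϱbar : ℝ) (hϱ : 0 < ϱbar)
    (p p' P P' : ℝ → ℝ)
    (hpc : ContinuousOn p (Ico 0 ϱbar))
    (hpd : ∀ x ∈ Ioo 0 ϱbar, HasDerivAt p (p' x) x)
    (hppos : ∀ x ∈ Ioo 0 ϱbar, 0 < p' x)
    (hpnn : ∀ x ∈ Ioo 0 ϱbar, 0 ≤ p x)
    (hPd : ∀ x ∈ Ioo 0 ϱbar, HasDerivAt P (P' x) x)
    (hODE : ∀ x ∈ Ioo 0 ϱbar, P' x * x - P x = p x)
    (r0 : ℝ) (h0 : 0 < r0) (h0' : r0 < ϱbar) :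
    ∀ r ∈ Ioo r0 ϱbar,
      P r ≤ P r0 + ϱbar * |P' r0 - p r0 / r0| + ϱbar / r0 ^ 2 * (ϱbar - r0) * p r := by
  intro r hr
  obtain ⟨hr0r, hrϱ⟩ := hr
  have hsub : Icc r0 r ⊆ Ioo 0 ϱbar := fun x hx =>
    ⟨lt_of_lt_of_le h0 hx.1, lt_of_le_of_lt hx.2 hrϱ⟩
  -- p is monotone on [r0, r]
  have hpmono : MonotoneOn p (Icc r0 r) := by
    apply monotoneOn_of_deriv_nonneg (convex_Icc r0 r)
    · exact hpc.mono (fun x hx => ⟨(hsub hx).1.le, (hsub hx).2⟩)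
    · intro x hx
      have hx' : x ∈ Ioo 0 ϱbar := hsub (interior_subset hx)
      exact (hpd x hx').differentiableAt.differentiableWithinAt
    · intro x hx
      rw [interior_Icc] at hx
      have hx' := hsub (Ioo_subset_Icc_self hx)
      rw [(hpd x hx').deriv]
      exact (hppos x hx').le
  set g : ℝ → ℝ := fun x => P x / x - p r / r0 ^ 2 * x with hg
  have hgd : ∀ x ∈ Icc r0 r, HasDerivAt g (p x / x ^ 2 - p r / r0 ^ 2) x := by
    intro x hx
    have hx' := hsub hx
    have hx0 : x ≠ 0 := ne_of_gt hx'.1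
    have h1 : HasDerivAt (fun y => P y / y) ((P' x * x - P x * 1) / x ^ 2) x :=
      (hPd x hx').div (hasDerivAt_id x) hx0
    have h2 : HasDerivAt (fun y => p r / r0 ^ 2 * y) (p r / r0 ^ 2) x := by
      simpa using (hasDerivAt_id x).const_mul (p r / r0 ^ 2)
    have := h1.sub h2
    refine this.congr_deriv ?_
    rw [mul_one, hODE x hx']
  -- g is antitone on [r0, r]
  have hganti : AntitoneOn g (Icc r0 r) := by
    apply antitoneOn_of_deriv_nonpos (convex_Icc r0 r)
    · exact ContinuousOn.mono (fun x hx => (hgd x hx).continuousAt.continuousWithinAt) le_rfl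
    · intro x hx
      exact (hgd x (interior_subset hx)).differentiableAt.differentiableWithinAt
    · intro x hx
      rw [interior_Icc] at hx
      have hxI := Ioo_subset_Icc_self hx
      rw [(hgd x hxI).deriv]
      have hpx : p x ≤ p r := hpmono hxI (right_mem_Icc.mpr hr0r.le) hx.2.le
      have hx0 : r0 ≤ x := hx.1.le
      have hpxnn : 0 ≤ p x := hpnn x (hsub hxI)
      have hx2 : r0 ^ 2 ≤ x ^ 2 := by nlinarith
      have : p x / x ^ 2 ≤ p r / r0 ^ 2 :=
        div_le_div₀ (hpxnn.trans hpx) hpx (by positivity) hx2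
      linarith
  have key : g r ≤ g r0 :=
    hganti (left_mem_Icc.mpr hr0r.le) (right_mem_Icc.mpr hr0r.le) hr0r.le
  simp only [hg] at key
  have hr0I : r0 ∈ Ioo 0 ϱbar := ⟨h0, h0'⟩
  have hODE0 := hODE r0 hr0I
  have habs : P' r0 - p r0 / r0 = P r0 / r0 := by
    field_simp
    linarith
  rw [habs]
  have hprnn : 0 ≤ p r := hpnn r ⟨lt_trans h0 hr0r, hrϱ⟩
  have hrpos : 0 < r := lt_trans h0 hr0r
  have hrne : r ≠ 0 := ne_of_gt hrpos
  rw [abs_div, abs_of_pos h0]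
  have key2 : P r / r ≤ P r0 / r0 + p r / r0 ^ 2 * (r - r0) := by
    nlinarith [key, mul_sub (p r / r0 ^ 2) r r0]
  have h1 : P r ≤ P r0 / r0 * r + p r / r0 ^ 2 * (r - r0) * r := by
    have := mul_le_mul_of_nonneg_right key2 hrpos.le
    rw [div_mul_cancel₀ _ hrne] at this
    linarith [this, add_mul (P r0 / r0) (p r / r0 ^ 2 * (r - r0)) r]
  have h2 : P r0 / r0 * r ≤ P r0 + ϱbar * (|P r0| / r0) := by
    have hP : P r0 * r ≤ P r0 * r0 + ϱbar * |P r0| := by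
      nlinarith [mul_nonneg (sub_nonneg.mpr (le_abs_self (P r0))) (sub_nonneg.mpr hr0r.le),
        mul_nonneg (abs_nonneg (P r0)) (show (0:ℝ) ≤ ϱbar - (r - r0) by linarith)]
    calc P r0 / r0 * r = P r0 * r / r0 := by ring
      _ ≤ (P r0 * r0 + ϱbar * |P r0|) / r0 := by gcongr
      _ = P r0 + ϱbar * (|P r0| / r0) := by field_simp
  have hr02 : (0:ℝ) < r0 ^ 2 := by positivity
  have hA : r * (r - r0) ≤ ϱbar * (ϱbar - r0) := by nlinarith
  have h3 : p r / r0 ^ 2 * (r - r0) * r ≤ ϱbar / r0 ^ 2 * (ϱbar - r0) * p r := by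
    have h := mul_le_mul_of_nonneg_left hA hprnn
    rw [div_mul_eq_mul_div, div_mul_eq_mul_div, div_mul_eq_mul_div, div_mul_eq_mul_div,
      div_le_div_iff₀ hr02 hr02]
    nlinarith [h, hr02]
  linarith
end

section
/- Suppose $y : [0,\infty) \to [0,\infty)$ and $h : [0,\infty) \to [0,\infty)$ (locally integrable) satisfy, for a.e. $T \geq 0$ and all $\tau \geq 0$, $y(T+\tau) - y(T) + \kappa \int_T^{T+\tau} h(t)\, dt \leq \omega \tau$ for constants $\kappa, \omega > 0$, together with the coercivity $h(t) \geq \alpha\, y(t) - \beta$ for a.e. $t$ and constants $\alpha > 0$, $\beta \geq 0$. Then $\limsup_{t \to \infty} y(t) \leq \mathcal{E}_\infty$ and $\limsup_{T\to\infty} \int_T^{T+1} h(t)\, dt \leq \mathcal{E}_\infty'$, where $\mathcal{E}_\infty, \mathcal{E}_\infty'$ depend only on $\kappa, \omega, \alpha, \beta$ and not on $y(0)$. -/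
open Set MeasureTheory Filter

theorem stmt12 (κ ω α β : ℝ) (hκ : 0 < κ) (hω : 0 < ω) (hα : 0 < α) (hβ : 0 ≤ β) :
    ∃ E E' : ℝ, ∀ y h : ℝ → ℝ,
      (∀ t, 0 ≤ y t) → (∀ t, 0 ≤ h t) →
      (∀ a b : ℝ, IntervalIntegrable h volume a b) →
      (∀ᵐ T ∂(volume.restrict (Ici (0:ℝ))), ∀ τ ≥ (0:ℝ),
        y (T + τ) - y T + κ * ∫ t in T..(T + τ), h t ≤ ω * τ) →
      (∀ᵐ t ∂(volume.restrict (Ici (0:ℝ))), α * y t - β ≤ h t) →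
      limsup y atTop ≤ E ∧
      limsup (fun T => ∫ t in T..(T + 1), h t) atTop ≤ E' := by
  set M : ℝ := (ω + κ*α*ω + κ*β)/(κ*α) with hMdef
  refine ⟨M + 1 + ω, (M + 1 + 2*ω)/κ, ?_⟩
  intro y h hy hh hint hmain hco
  have hM0 : 0 ≤ M := by positivity
  have hκα : (0:ℝ) < κ*α := mul_pos hκ hα
  have hq : (0:ℝ) < 1 + κ*α := by linarith
  have hMc : M * (κ*α) = ω + κ*α*ω + κ*β := by
    rw [hMdef]; field_simp
  -- a.e. statements with respect to volume on all of ℝ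
  have hmain' : ∀ᵐ T : ℝ, 0 ≤ T → ∀ τ ≥ (0:ℝ),
      y (T + τ) - y T + κ * ∫ t in T..(T + τ), h t ≤ ω * τ :=
    (ae_restrict_iff' measurableSet_Ici).mp hmain
  have hco' : ∀ᵐ t : ℝ, 0 ≤ t → α * y t - β ≤ h t :=
    (ae_restrict_iff' measurableSet_Ici).mp hco
  set G : Set ℝ := {t : ℝ | (0 ≤ t → ∀ τ ≥ (0:ℝ),
      y (t + τ) - y t + κ * ∫ u in t..(t + τ), h u ≤ ω * τ) ∧ (0 ≤ t → α * y t - β ≤ h t)}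
    with hGdef
  have hG : ∀ᵐ t : ℝ, t ∈ G := hmain'.and hco'
  have hGc : volume Gᶜ = 0 := by
    exact ae_iff.mp hG
  -- find a starting point T ∈ [0,1) with T + n ∈ G for all n
  have htrans : ∀ n : ℕ, ∀ᵐ T : ℝ, T + (n:ℝ) ∈ G := by
    intro n
    have hmp := (measurePreserving_add_right volume (n:ℝ)).quasiMeasurePreserving
    have : volume ((fun T : ℝ => T + (n:ℝ)) ⁻¹' Gᶜ) = 0 := hmp.preimage_null hGc
    rw [ae_iff]
    simpa [Set.preimage, Set.compl_setOf] using this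
  have hGn : ∀ᵐ T : ℝ, ∀ n : ℕ, T + (n:ℝ) ∈ G := (ae_all_iff).mpr htrans
  have hex : (Ico (0:ℝ) 1 ∩ {T : ℝ | ∀ n : ℕ, T + (n:ℝ) ∈ G}).Nonempty := by
    by_contra hcon
    rw [Set.not_nonempty_iff_eq_empty] at hcon
    have hsub : Ico (0:ℝ) 1 ⊆ {T : ℝ | ¬ ∀ n : ℕ, T + (n:ℝ) ∈ G} := by
      intro x hx
      intro hxg
      exact (Set.eq_empty_iff_forall_notMem.mp hcon x) ⟨hx, hxg⟩
    have h0 : volume {T : ℝ | ¬ ∀ n : ℕ, T + (n:ℝ) ∈ G} = 0 := ae_iff.mp hGn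
    have := measure_mono_null hsub h0
    rw [Real.volume_Ico] at this
    simp at this
  obtain ⟨T, hT01, hTG⟩ := hex
  -- the key one-step estimate
  have key : ∀ s : ℝ, 0 ≤ s →
      (∀ τ ≥ (0:ℝ), y (s + τ) - y s + κ * ∫ u in s..(s + τ), h u ≤ ω * τ) →
      (1 + κ*α) * y (s + 1) ≤ y s + (ω + κ*α*ω + κ*β) := by
    intro s hs hP
    have h1 := hP 1 zero_le_one
    have hlow : α * (y (s + 1) - ω) - β ≤ ∫ u in s..(s + 1), h u := by
      have hae : ∀ᵐ t ∂(volume.restrict (Ioc s (s+1))), α * (y (s + 1) - ω) - β ≤ h t := by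
        filter_upwards [ae_restrict_of_ae hG, ae_restrict_mem measurableSet_Ioc]
          with t htG htmem
        have ht0 : 0 ≤ t := hs.trans htmem.1.le
        have hyt : y (s + 1) ≤ y t + ω := by
          have hm := htG.1 ht0 (s + 1 - t) (by linarith [htmem.2])
          have harg : t + (s + 1 - t) = s + 1 := by ring
          rw [harg] at hm
          have hint0 : 0 ≤ ∫ u in t..(s+1), h u :=
            intervalIntegral.integral_nonneg (by linarith [htmem.2]) (fun u _ => hh u)
          have hω' : ω * (s + 1 - t) ≤ ω * 1 :=
            mul_le_mul_of_nonneg_left (by linarith [htmem.1]) hω.le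
          nlinarith [mul_nonneg hκ.le hint0]
        have hc := htG.2 ht0
        nlinarith [mul_le_mul_of_nonneg_left hyt hα.le]
      have hconst : α * (y (s + 1) - ω) - β
          = ∫ _ in Ioc s (s+1), (α * (y (s + 1) - ω) - β) ∂volume := by
        rw [setIntegral_const]
        rw [Real.volume_real_Ioc]
        norm_num
      calc α * (y (s + 1) - ω) - β
          = ∫ _ in Ioc s (s+1), (α * (y (s + 1) - ω) - β) ∂volume := hconst
        _ ≤ ∫ u in Ioc s (s+1), h u ∂volume := by
            refine setIntegral_mono_ae_restrict ?_ ?_ hae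
            · exact (integrableOn_const_iff (by finiteness)).mpr (Or.inr (by rw [Real.volume_Ioc]; norm_num))
            · exact (hint s (s+1)).1
        _ = ∫ u in s..(s+1), h u := (intervalIntegral.integral_of_le (by linarith)).symm
    nlinarith [mul_le_mul_of_nonneg_left hlow hκ.le]
  -- iterate
  have iter : ∀ n : ℕ, y (T + (n:ℝ)) * (1 + κ*α)^n ≤ y T + M * (1 + κ*α)^n := by
    intro n
    induction n with
    | zero => simpa using hM0
    | succ n ih =>
      have hTn0 : 0 ≤ T + (n:ℝ) := add_nonneg hT01.1 n.cast_nonneg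
      have hPn := (hTG n).1 hTn0
      have hk := key (T + (n:ℝ)) hTn0 hPn
      have harg : T + ((n:ℕ) + 1 : ℝ) = T + (n:ℝ) + 1 := by ring
      have hp : (0:ℝ) < (1 + κ*α)^n := pow_pos hq n
      push_cast
      rw [harg, pow_succ]
      nlinarith [mul_le_mul_of_nonneg_right hk hp.le, ih]
  obtain ⟨N, hN⟩ := pow_unbounded_of_one_lt (y T) (by linarith : (1:ℝ) < 1 + κ*α)
  have hyb : ∀ n : ℕ, N ≤ n → y (T + (n:ℝ)) ≤ M + 1 := by
    intro n hn
    have h1 := iter n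
    have h2 : y T ≤ (1 + κ*α)^n := hN.le.trans (pow_le_pow_right₀ (by linarith) hn)
    have hp : (0:ℝ) < (1 + κ*α)^n := pow_pos hq n
    nlinarith [hy (T + (n:ℝ))]
  -- final pointwise bounds for large t
  have hfin : ∀ t : ℝ, T + (N:ℝ) + 1 ≤ t →
      y t ≤ M + 1 + ω ∧ (∫ u in t..(t+1), h u) ≤ (M + 1 + 2*ω)/κ := by
    intro t ht
    set n := ⌊t - T⌋₊ with hn
    have htT0 : (0:ℝ) ≤ t - T := by linarith [(Nat.cast_nonneg N : (0:ℝ) ≤ (N:ℝ))]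
    have hn1 : (n:ℝ) ≤ t - T := Nat.floor_le htT0
    have hn2 : t - T < (n:ℝ) + 1 := Nat.lt_floor_add_one _
    have hnN : N ≤ n := Nat.le_floor (by exact_mod_cast le_of_add_le_add_right (by linarith : (N:ℝ) + 1 ≤ (t-T) + 1))
    have hyn : y (T + (n:ℝ)) ≤ M + 1 := hyb n hnN
    have hTn0 : 0 ≤ T + (n:ℝ) := add_nonneg hT01.1 n.cast_nonneg
    have hPn := (hTG n).1 hTn0
    constructor
    · have hm := hPn (t - (T + (n:ℝ))) (by linarith)
      have harg : T + (n:ℝ) + (t - (T + (n:ℝ))) = t := by ring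
      rw [harg] at hm
      have hint0 : 0 ≤ ∫ u in (T + (n:ℝ))..t, h u :=
        intervalIntegral.integral_nonneg (by linarith) (fun u _ => hh u)
      have hω' : ω * (t - (T + (n:ℝ))) ≤ ω * 1 :=
        mul_le_mul_of_nonneg_left (by linarith) hω.le
      nlinarith [mul_nonneg hκ.le hint0]
    · have hm := hPn (t + 1 - (T + (n:ℝ))) (by linarith)
      have harg : T + (n:ℝ) + (t + 1 - (T + (n:ℝ))) = t + 1 := by ring
      rw [harg] at hm
      have hsplit : (∫ u in (T + (n:ℝ))..t, h u) + ∫ u in t..(t+1), h u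
          = ∫ u in (T + (n:ℝ))..(t+1), h u :=
        intervalIntegral.integral_add_adjacent_intervals (hint _ _) (hint _ _)
      rw [← hsplit] at hm
      have h1 : 0 ≤ ∫ u in (T + (n:ℝ))..t, h u :=
        intervalIntegral.integral_nonneg (by linarith) (fun u _ => hh u)
      have hω' : ω * (t + 1 - (T + (n:ℝ))) ≤ ω * 2 :=
        mul_le_mul_of_nonneg_left (by linarith) hω.le
      rw [le_div_iff₀ hκ]
      nlinarith [hy (t+1), mul_nonneg hκ.le h1]
  have hev1 : ∀ᶠ t in atTop, y t ≤ M + 1 + ω :=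
    eventually_atTop.mpr ⟨T + (N:ℝ) + 1, fun t ht => (hfin t ht).1⟩
  have hev2 : ∀ᶠ t in atTop, (fun T => ∫ u in T..(T + 1), h u) t ≤ (M + 1 + 2*ω)/κ :=
    eventually_atTop.mpr ⟨T + (N:ℝ) + 1, fun t ht => (hfin t ht).2⟩
  constructor
  · exact limsup_le_of_le (isCoboundedUnder_le_of_eventually_le atTop (Eventually.of_forall (fun t => hy t))) hev1
  · exact limsup_le_of_le (isCoboundedUnder_le_of_eventually_le atTop (Eventually.of_forall (fun t => intervalIntegral.integral_nonneg (by linarith) (fun u _ => hh u)))) hev2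
end
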